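/- Let k be a commutative ring and A an associative unital k-algebra which is finitely generated and projective as a k-module. Then A is separable (i.e. there exists e = Σ e¹⊗e² ∈ A⊗A with (a⊗1)·e = e·(1⊗a) for all a ∈ A and Σ e¹e² = 1_A) if and only if there exists R ∈ End_k(A)⊗End_k(A) such that (i) R is a solution of the FS-equation R¹²R²³ = R²³R¹³ = R¹³R¹² in End_k(A)⊗End_k(A)⊗End_k(A), (ii) R satisfies the normalizing separability condition Σ R¹∘R² = I_A (the image of R under the multiplication map End_k(A)⊗End_k(A) → End_k(A) is the identity), and (iii) there is a k-algebra isomorphism A ≅ A(R), where A(R) := {f ∈ End_k(A) | (f⊗1)·R = R·(1⊗f) in End_k(A)⊗End_k(A)}. -/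

import Mathlib

open TensorProduct

variable {k B : Type*} [CommRing k] [Ring B] [Algebra k B]

/-- The map `B ⊗ B → B ⊗ B ⊗ B`, `x ⊗ y ↦ x ⊗ y ⊗ 1`. -/
noncomputable def leg12 : B ⊗[k] B →ₐ[k] B ⊗[k] (B ⊗[k] B) :=
  Algebra.TensorProduct.map (AlgHom.id k B) Algebra.TensorProduct.includeLeft

/-- The map `B ⊗ B → B ⊗ B ⊗ B`, `x ⊗ y ↦ x ⊗ 1 ⊗ y`. -/
noncomputable def leg13 : B ⊗[k] B →ₐ[k] B ⊗[k] (B ⊗[k] B) :=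
  Algebra.TensorProduct.map (AlgHom.id k B) Algebra.TensorProduct.includeRight

/-- The map `B ⊗ B → B ⊗ B ⊗ B`, `x ⊗ y ↦ 1 ⊗ x ⊗ y`. -/
noncomputable def leg23 : B ⊗[k] B →ₐ[k] B ⊗[k] (B ⊗[k] B) :=
  Algebra.TensorProduct.includeRight

section DualFamily
variable {k : Type*} [CommRing k]
variable {M N P Q : Type*} [AddCommGroup M] [Module k M] [AddCommGroup N] [Module k N]
  [AddCommGroup P] [Module k P] [AddCommGroup Q] [Module k Q]

/-- slice the second factor with a functional: `m ⊗ n ↦ φ n • m`. -/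
noncomputable def sliceFst (φ : N →ₗ[k] k) : M ⊗[k] N →ₗ[k] M :=
  (TensorProduct.rid k M).toLinearMap.comp (LinearMap.lTensor M φ)

/-- slice the first factor with a functional: `m ⊗ n ↦ φ m • n`. -/
noncomputable def sliceSnd (φ : M →ₗ[k] k) : M ⊗[k] N →ₗ[k] N :=
  (TensorProduct.lid k N).toLinearMap.comp (LinearMap.rTensor N φ)

@[simp] lemma sliceFst_tmul (φ : N →ₗ[k] k) (m : M) (n : N) :
    sliceFst (M := M) φ (m ⊗ₜ n) = φ n • m := by
  simp [sliceFst]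

@[simp] lemma sliceSnd_tmul (φ : M →ₗ[k] k) (m : M) (n : N) :
    sliceSnd (N := N) φ (m ⊗ₜ n) = φ m • n := by
  simp [sliceSnd]

/-- A finite dual family for a module. -/
def IsDualFamily {ι : Type} [Fintype ι] (u : ι → M) (φ : ι → (M →ₗ[k] k)) : Prop :=
  ∀ x : M, ∑ j, φ j x • u j = x

lemma exists_dualFamily (M : Type*) [AddCommGroup M] [Module k M]
    [Module.Finite k M] [Module.Projective k M] :
    ∃ (n : ℕ) (u : Fin n → M) (φ : Fin n → (M →ₗ[k] k)), IsDualFamily u φ := by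
  obtain ⟨n, f, g, hsurj, hinj, hfg⟩ :=
    Module.Finite.exists_comp_eq_id_of_projective k M
  refine ⟨n, fun j => f (Pi.single j 1), fun j => (LinearMap.proj j).comp g, fun x => ?_⟩
  have : ∑ j, ((LinearMap.proj j).comp g) x • f (Pi.single j 1)
      = f (∑ j, (g x) j • (Pi.single j 1 : Fin n → k)) := by
    simp [map_sum, map_smul]
  rw [this]
  have : (∑ j, (g x) j • (Pi.single j 1 : Fin n → k)) = g x := by
    ext i
    simp only [Finset.sum_apply, Pi.smul_apply, Pi.single_apply, smul_eq_mul,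
      mul_ite, mul_one, mul_zero]
    rw [Finset.sum_eq_single i] <;> simp +contextual [eq_comm]
  rw [this, ← LinearMap.comp_apply, hfg, LinearMap.id_apply]

end DualFamily

section DB2
variable {k : Type*} [CommRing k]
variable {M N M' : Type*} [AddCommGroup M] [Module k M] [AddCommGroup N] [Module k N]
  [AddCommGroup M'] [Module k M']

lemma eq_sum_sliceFst {ι : Type} [Fintype ι] {u : ι → N} {φ : ι → (N →ₗ[k] k)}
    (h : IsDualFamily u φ) (z : M ⊗[k] N) :
    z = ∑ j, (sliceFst (φ j) z) ⊗ₜ[k] u j := by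
  induction z with
  | zero => simp
  | tmul m b =>
    simp only [sliceFst_tmul]
    rw [show ∑ j, (φ j b • m) ⊗ₜ[k] u j = m ⊗ₜ[k] ∑ j, φ j b • u j by
      rw [tmul_sum]; exact Finset.sum_congr rfl fun j _ => by
        rw [smul_tmul, tmul_smul]]
    rw [h b]
  | add z w hz hw =>
    conv_lhs => rw [hz, hw]
    rw [← Finset.sum_add_distrib]
    refine Finset.sum_congr rfl fun j _ => ?_
    rw [map_add, add_tmul]

lemma eq_sum_sliceSnd {ι : Type} [Fintype ι] {u : ι → M} {φ : ι → (M →ₗ[k] k)}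
    (h : IsDualFamily u φ) (z : M ⊗[k] N) :
    z = ∑ j, u j ⊗ₜ[k] (sliceSnd (φ j) z) := by
  induction z with
  | zero => simp
  | tmul a nn =>
    simp only [sliceSnd_tmul]
    rw [show ∑ j, u j ⊗ₜ[k] (φ j a • nn) = (∑ j, φ j a • u j) ⊗ₜ[k] nn by
      rw [sum_tmul]; exact Finset.sum_congr rfl fun j _ => by
        rw [smul_tmul, tmul_smul]]
    rw [h a]
  | add z w hz hw =>
    conv_lhs => rw [hz, hw]
    rw [← Finset.sum_add_distrib]
    refine Finset.sum_congr rfl fun j _ => ?_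
    rw [map_add, tmul_add]

lemma sliceFst_rTensor (φ : N →ₗ[k] k) (f : M →ₗ[k] M') (z : M ⊗[k] N) :
    sliceFst φ (LinearMap.rTensor N f z) = f (sliceFst φ z) := by
  induction z with
  | zero => simp
  | tmul m nn => simp
  | add z w hz hw => simp [map_add, hz, hw]

lemma sliceSnd_lTensor (φ : M →ₗ[k] k) (f : N →ₗ[k] M') (z : M ⊗[k] N) :
    sliceSnd φ (LinearMap.lTensor M f z) = f (sliceSnd φ z) := by
  induction z with
  | zero => simp
  | tmul m nn => simp
  | add z w hz hw => simp [map_add, hz, hw]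

/-- If `N` has a finite dual family, `f ⊗ id_N` is injective whenever `f` is. -/
lemma rTensor_injective {ι : Type} [Fintype ι] {u : ι → N} {φ : ι → (N →ₗ[k] k)}
    (h : IsDualFamily u φ) {f : M →ₗ[k] M'} (hf : Function.Injective f) :
    Function.Injective (LinearMap.rTensor N f) := by
  intro x y hxy
  rw [eq_sum_sliceFst (M := M) h x, eq_sum_sliceFst (M := M) h y]
  refine Finset.sum_congr rfl fun j _ => ?_
  have : f (sliceFst (φ j) x) = f (sliceFst (φ j) y) := by
    rw [← sliceFst_rTensor, ← sliceFst_rTensor, hxy]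
  rw [hf this]

/-- If `M` has a finite dual family, `id_M ⊗ f` is injective whenever `f` is. -/
lemma lTensor_injective {ι : Type} [Fintype ι] {u : ι → M} {φ : ι → (M →ₗ[k] k)}
    (h : IsDualFamily u φ) {f : N →ₗ[k] M'} (hf : Function.Injective f) :
    Function.Injective (LinearMap.lTensor M f) := by
  intro x y hxy
  rw [eq_sum_sliceSnd (N := N) h x, eq_sum_sliceSnd (N := N) h y]
  refine Finset.sum_congr rfl fun j _ => ?_
  have : f (sliceSnd (φ j) x) = f (sliceSnd (φ j) y) := by
    rw [← sliceSnd_lTensor, ← sliceSnd_lTensor, hxy]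
  rw [hf this]


/-- dual family for a tensor product. -/
lemma IsDualFamily.tensor {ι κ : Type} [Fintype ι] [Fintype κ]
    {u : ι → M} {φ : ι → (M →ₗ[k] k)} {v : κ → N} {χ : κ → (N →ₗ[k] k)}
    (h : IsDualFamily u φ) (h' : IsDualFamily v χ) :
    IsDualFamily (fun p : ι × κ => u p.1 ⊗ₜ[k] v p.2)
      (fun p : ι × κ => (χ p.2).comp (sliceSnd (N := N) (φ p.1))) := by
  intro z
  induction z with
  | zero => simp
  | tmul a b =>
    rw [Fintype.sum_prod_type]
    have : ∀ i : ι, ∑ j : κ, ((χ j).comp (sliceSnd (N := N) (φ i))) (a ⊗ₜ[k] b) •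
        (u i ⊗ₜ[k] v j) = (φ i a • u i) ⊗ₜ[k] (∑ j, χ j b • v j) := by
      intro i
      rw [tmul_sum]
      refine Finset.sum_congr rfl fun j _ => ?_
      simp only [LinearMap.comp_apply, sliceSnd_tmul, map_smul, smul_eq_mul]
      simp [tmul_smul, smul_tmul', smul_smul, mul_comm]
    rw [Finset.sum_congr rfl fun i _ => this i]
    rw [← sum_tmul, h' b, h a]
  | add z w hz hw =>
    simp only [map_add, add_smul]
    rw [Finset.sum_add_distrib, hz, hw]

end DB2

@[simp] lemma leg12_tmul (a b : B) :
    (leg12 (a ⊗ₜ[k] b) : B ⊗[k] (B ⊗[k] B)) = a ⊗ₜ (b ⊗ₜ 1) := by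
  simp [leg12]

@[simp] lemma leg13_tmul (a b : B) :
    (leg13 (a ⊗ₜ[k] b) : B ⊗[k] (B ⊗[k] B)) = a ⊗ₜ (1 ⊗ₜ b) := by
  simp [leg13]

@[simp] lemma leg23_tmul (x : B ⊗[k] B) :
    (leg23 x : B ⊗[k] (B ⊗[k] B)) = 1 ⊗ₜ x := by
  simp [leg23]

lemma mulLeft_tmul_one (c : B) (u : B ⊗[k] B) :
    (c ⊗ₜ[k] (1 : B)) * u
      = TensorProduct.map (LinearMap.mulLeft k c) LinearMap.id u := by
  induction u with
  | zero => simp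
  | tmul a b => simp [Algebra.TensorProduct.tmul_mul_tmul]
  | add u v hu hv => rw [mul_add, hu, hv, map_add]

lemma mulRight_one_tmul (c : B) (u : B ⊗[k] B) :
    u * ((1 : B) ⊗ₜ[k] c)
      = TensorProduct.map LinearMap.id (LinearMap.mulRight k c) u := by
  induction u with
  | zero => simp
  | tmul a b => simp [Algebra.TensorProduct.tmul_mul_tmul]
  | add u v hu hv => rw [add_mul, hu, hv, map_add]

/-- `g ↦ (g ⊗ 1) * y` -/
noncomputable def rr (y : B ⊗[k] B) : B →ₗ[k] B ⊗[k] B :=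
  (LinearMap.mulRight k y).comp ((TensorProduct.mk k B B).flip 1)

@[simp] lemma rr_apply (y : B ⊗[k] B) (g : B) : rr y g = (g ⊗ₜ[k] (1:B)) * y := rfl

/-- `g ↦ y * (1 ⊗ g)` -/
noncomputable def ll (y : B ⊗[k] B) : B →ₗ[k] B ⊗[k] B :=
  (LinearMap.mulLeft k y).comp (TensorProduct.mk k B B 1)

@[simp] lemma ll_apply (y : B ⊗[k] B) (g : B) : ll y g = y * ((1:B) ⊗ₜ[k] g) := rfl

lemma prod_12_23 (x y : B ⊗[k] B) :
    leg12 x * leg23 y = LinearMap.lTensor B (rr y) x := by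
  induction x with
  | zero => simp
  | tmul a b => simp [Algebra.TensorProduct.tmul_mul_tmul]
  | add u v hu hv => rw [map_add, add_mul, hu, hv, map_add]

lemma prod_23_13 (x y : B ⊗[k] B) :
    leg23 y * leg13 x = LinearMap.lTensor B (ll y) x := by
  induction x with
  | zero => simp
  | tmul a b => simp [Algebra.TensorProduct.tmul_mul_tmul]
  | add u v hu hv => rw [map_add, mul_add, hu, hv, map_add]

section Slices
variable (ξ : B →ₗ[k] k)

lemma slice1_12_23 (x y : B ⊗[k] B) :
    sliceSnd (N := B ⊗[k] B) ξ (leg12 x * leg23 y)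
      = ((sliceSnd (N := B) ξ x) ⊗ₜ[k] (1:B)) * y := by
  induction x with
  | zero => simp
  | tmul a b =>
    induction y with
    | zero => simp
    | tmul c d =>
      simp [Algebra.TensorProduct.tmul_mul_tmul, smul_tmul', smul_mul_assoc]
    | add u v hu hv => rw [map_add, mul_add, map_add, hu, hv, mul_add]
  | add u v hu hv =>
    rw [map_add, add_mul, map_add, hu, hv, map_add, add_tmul, add_mul]

lemma slice1_23_13 (x y : B ⊗[k] B) :
    sliceSnd (N := B ⊗[k] B) ξ (leg23 y * leg13 x)
      = y * ((1:B) ⊗ₜ[k] (sliceSnd (N := B) ξ x)) := by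
  induction x with
  | zero => simp
  | tmul a b =>
    induction y with
    | zero => simp
    | tmul c d =>
      simp [Algebra.TensorProduct.tmul_mul_tmul, mul_smul_comm, tmul_smul]
    | add u v hu hv => rw [map_add, add_mul, map_add, hu, hv, add_mul]
  | add u v hu hv =>
    rw [map_add, mul_add, map_add, hu, hv, map_add, tmul_add, mul_add]

lemma slice3_12_23 (x y : B ⊗[k] B) :
    LinearMap.lTensor B (sliceFst (M := B) ξ) (leg12 x * leg23 y)
      = x * ((1:B) ⊗ₜ[k] (sliceFst (M := B) ξ y)) := by
  induction x with
  | zero => simp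
  | tmul a b =>
    induction y with
    | zero => simp
    | tmul c d =>
      simp [Algebra.TensorProduct.tmul_mul_tmul, tmul_smul, mul_smul_comm]
    | add u v hu hv =>
      simp only [map_add, mul_add, hu, hv, tmul_add]
  | add u v hu hv =>
    simp only [map_add, add_mul, hu, hv]

lemma slice3_13_12 (x y : B ⊗[k] B) :
    LinearMap.lTensor B (sliceFst (M := B) ξ) (leg13 x * leg12 y)
      = ((sliceFst (M := B) ξ x) ⊗ₜ[k] (1:B)) * y := by
  induction x with
  | zero => simp
  | tmul a b =>
    induction y with
    | zero => simp
    | tmul c d =>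
      simp [Algebra.TensorProduct.tmul_mul_tmul, smul_tmul', smul_mul_assoc]
    | add u v hu hv =>
      simp only [map_add, mul_add, hu, hv]
  | add u v hu hv =>
    simp only [map_add, add_mul, hu, hv, add_tmul]

end Slices

section Forward
variable {C : Type*} [Ring C] [Algebra k C]

lemma fs_one {e : B ⊗[k] B} (he : ∀ c : B, (c ⊗ₜ[k] (1:B)) * e = e * ((1:B) ⊗ₜ[k] c))
    (x : B ⊗[k] B) : leg12 x * leg23 e = leg23 e * leg13 x := by
  induction x with
  | zero => simp
  | tmul a b =>
    have h1 : (leg12 (a ⊗ₜ[k] b) : B ⊗[k] (B ⊗[k] B)) * leg23 e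
        = a ⊗ₜ[k] ((b ⊗ₜ[k] (1:B)) * e) := by
      rw [leg12_tmul, leg23_tmul, Algebra.TensorProduct.tmul_mul_tmul, mul_one]
    have h2 : (leg23 e : B ⊗[k] (B ⊗[k] B)) * leg13 (a ⊗ₜ[k] b)
        = a ⊗ₜ[k] (e * ((1:B) ⊗ₜ[k] b)) := by
      rw [leg13_tmul, leg23_tmul, Algebra.TensorProduct.tmul_mul_tmul, one_mul]
    rw [h1, h2, he b]
  | add u v hu hv => rw [map_add, add_mul, map_add, mul_add, hu, hv]

lemma prod_13_12_pure (c d : B) (u : B ⊗[k] B) :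
    (leg13 (c ⊗ₜ[k] d) : B ⊗[k] (B ⊗[k] B)) * leg12 u
      = TensorProduct.map (LinearMap.mulLeft k c) ((TensorProduct.mk k B B).flip d) u := by
  induction u with
  | zero => simp
  | tmul a b =>
    simp [Algebra.TensorProduct.tmul_mul_tmul]
  | add u v hu hv => rw [map_add, mul_add, hu, hv, map_add]

lemma prod_12_23_pure (c d : B) (u : B ⊗[k] B) :
    (leg12 u : B ⊗[k] (B ⊗[k] B)) * leg23 (c ⊗ₜ[k] d)
      = TensorProduct.map LinearMap.id
          (((TensorProduct.mk k B B).flip d).comp (LinearMap.mulRight k c)) u := by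
  induction u with
  | zero => simp
  | tmul a b =>
    simp [Algebra.TensorProduct.tmul_mul_tmul]
  | add u v hu hv => rw [map_add, add_mul, hu, hv, map_add]

lemma fs_two {e : B ⊗[k] B} (he : ∀ c : B, (c ⊗ₜ[k] (1:B)) * e = e * ((1:B) ⊗ₜ[k] c))
    (y : B ⊗[k] B) : leg13 y * leg12 e = leg12 e * leg23 y := by
  induction y with
  | zero => simp
  | tmul c d =>
    have key1 : ∀ u : B ⊗[k] B,
        TensorProduct.map (LinearMap.mulLeft k c) ((TensorProduct.mk k B B).flip d) u
          = TensorProduct.map LinearMap.id ((TensorProduct.mk k B B).flip d)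
              ((c ⊗ₜ[k] (1:B)) * u) := by
      intro u
      rw [mulLeft_tmul_one]
      induction u with
      | zero => simp
      | tmul a b => simp
      | add u v hu hv => rw [map_add, map_add, map_add, hu, hv]
    have key2 : ∀ u : B ⊗[k] B,
        TensorProduct.map LinearMap.id
            (((TensorProduct.mk k B B).flip d).comp (LinearMap.mulRight k c)) u
          = TensorProduct.map LinearMap.id ((TensorProduct.mk k B B).flip d)
              (u * ((1:B) ⊗ₜ[k] c)) := by
      intro u
      rw [mulRight_one_tmul]
      induction u with
      | zero => simp
      | tmul a b => simp
      | add u v hu hv => rw [map_add, map_add, map_add, hu, hv]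
    rw [prod_13_12_pure, prod_12_23_pure, key1 e, he c, key2 e]
  | add u v hu hv => rw [map_add, add_mul, map_add, mul_add, hu, hv]

lemma mul'_map (f : B →ₐ[k] C) (u : B ⊗[k] B) :
    LinearMap.mul' k C (Algebra.TensorProduct.map f f u) = f (LinearMap.mul' k B u) := by
  induction u with
  | zero => simp
  | tmul a b => simp
  | add u v hu hv => rw [map_add, map_add, hu, hv, map_add, map_add]

lemma map_leg12 (f : B →ₐ[k] C) (u : B ⊗[k] B) :
    Algebra.TensorProduct.map f (Algebra.TensorProduct.map f f) (leg12 u)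
      = leg12 (Algebra.TensorProduct.map f f u) := by
  induction u with
  | zero => simp
  | tmul a b => simp
  | add u v hu hv => rw [map_add, map_add, hu, hv, map_add, map_add]

lemma map_leg13 (f : B →ₐ[k] C) (u : B ⊗[k] B) :
    Algebra.TensorProduct.map f (Algebra.TensorProduct.map f f) (leg13 u)
      = leg13 (Algebra.TensorProduct.map f f u) := by
  induction u with
  | zero => simp
  | tmul a b => simp
  | add u v hu hv => rw [map_add, map_add, hu, hv, map_add, map_add]

lemma map_leg23 (f : B →ₐ[k] C) (u : B ⊗[k] B) :
    Algebra.TensorProduct.map f (Algebra.TensorProduct.map f f) (leg23 u)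
      = leg23 (Algebra.TensorProduct.map f f u) := by
  rw [leg23_tmul, leg23_tmul]
  simp

end Forward

set_option maxHeartbeats 1600000 in
set_option synthInstance.maxHeartbeats 1000000 in
/-- A finitely generated projective `k`-algebra `A` is separable iff it is
isomorphic to `A(R)` for a solution `R ∈ End_k(A) ⊗ End_k(A)` of the
FS-equation satisfying the normalizing separability condition. -/
theorem separable_iff_isomorphic_to_AR
    (k A : Type*) [CommRing k] [Ring A] [Algebra k A]
    [Module.Finite k A] [Module.Projective k A] :
    (∃ e : A ⊗[k] A,
      (∀ a : A, (a ⊗ₜ[k] (1 : A)) * e = e * ((1 : A) ⊗ₜ[k] a)) ∧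
      LinearMap.mul' k A e = 1) ↔
    (∃ R : Module.End k A ⊗[k] Module.End k A,
      (leg12 R * leg23 R = leg23 R * leg13 R ∧
        leg23 R * leg13 R = leg13 R * leg12 R) ∧
      LinearMap.mul' k (Module.End k A) R = 1 ∧
      ∃ S : Subalgebra k (Module.End k A),
        (S : Set (Module.End k A)) =
          {f : Module.End k A |
            (f ⊗ₜ[k] (1 : Module.End k A)) * R = R * ((1 : Module.End k A) ⊗ₜ[k] f)} ∧
        Nonempty (A ≃ₐ[k] S)) := by
  constructor
  · rintro ⟨e, he, hmul⟩
    set L : A →ₐ[k] Module.End k A := Algebra.lmul k A with hL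
    set R : Module.End k A ⊗[k] Module.End k A := Algebra.TensorProduct.map L L e with hR
    have hLapp : ∀ (a b : A), L a b = a * b := fun a b => by
      rw [hL, Algebra.coe_lmul_eq_mul, LinearMap.mul_apply']
    refine ⟨R, ⟨?_, ?_⟩, ?_, L.range, ?_, ⟨AlgEquiv.ofInjective L (Algebra.lmul_injective)⟩⟩
    · rw [hR, ← map_leg12, ← map_leg23, ← map_leg13, ← map_mul, ← map_mul, fs_one he e]
    · rw [hR, ← map_leg12, ← map_leg23, ← map_leg13, ← map_mul, ← map_mul,
        ← fs_one he e, fs_two he e]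
    · rw [hR, mul'_map, hmul, map_one]
    · ext f
      simp only [SetLike.mem_coe, AlgHom.mem_range, Set.mem_setOf_eq]
      constructor
      · rintro ⟨a, rfl⟩
        have h1 : (L a) ⊗ₜ[k] (1 : Module.End k A)
            = Algebra.TensorProduct.map L L (a ⊗ₜ[k] (1:A)) := by simp
        have h2 : (1 : Module.End k A) ⊗ₜ[k] (L a)
            = Algebra.TensorProduct.map L L ((1:A) ⊗ₜ[k] a) := by simp
        rw [hR, h1, h2, ← map_mul, ← map_mul, he a]
      · intro hf
        set Ψ : Module.End k A ⊗[k] Module.End k A →ₗ[k] Module.End k A :=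
          TensorProduct.lift (LinearMap.mk₂ k (fun g h => g * L (h 1))
            (fun g g' h => by simp [add_mul])
            (fun c g h => by simp [smul_mul_assoc])
            (fun g h h' => by simp [mul_add])
            (fun c g h => by simp [mul_smul_comm])) with hΨ
        have hΨtmul : ∀ (g h : Module.End k A), Ψ (g ⊗ₜ[k] h) = g * L (h 1) :=
          fun g h => by rw [hΨ]; simp
        have c1 : ∀ v : A ⊗[k] A, Ψ (Algebra.TensorProduct.map L L v)
            = L (LinearMap.mul' k A v) := by
          intro v
          induction v with
          | zero => simp
          | tmul a b =>
            simp only [Algebra.TensorProduct.map_tmul, hΨtmul, LinearMap.mul'_apply]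
            rw [hLapp b 1, mul_one, ← map_mul]
          | add u v hu hv => rw [map_add, map_add, hu, hv, map_add, map_add]
        have c2 : ∀ v : A ⊗[k] A, Ψ ((Algebra.TensorProduct.map L L v)
              * ((1 : Module.End k A) ⊗ₜ[k] f))
            = L (LinearMap.mul' k A v * f 1) := by
          intro v
          induction v with
          | zero => simp
          | tmul a b =>
            rw [Algebra.TensorProduct.map_tmul, Algebra.TensorProduct.tmul_mul_tmul,
              mul_one, hΨtmul, Module.End.mul_apply, hLapp b (f 1), ← map_mul,
              LinearMap.mul'_apply, mul_assoc]
          | add u v hu hv =>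
            rw [map_add, add_mul, map_add, hu, hv, map_add, add_mul, map_add]
        have c3 : ∀ u : Module.End k A ⊗[k] Module.End k A,
            Ψ ((f ⊗ₜ[k] (1 : Module.End k A)) * u) = f * Ψ u := by
          intro u
          induction u with
          | zero => simp
          | tmul g h =>
            rw [Algebra.TensorProduct.tmul_mul_tmul, one_mul, hΨtmul, hΨtmul, mul_assoc]
          | add u v hu hv => rw [mul_add, map_add, hu, hv, map_add, mul_add]
        refine ⟨f 1, ?_⟩
        have hfR := congrArg Ψ hf
        rw [c3 R, hR, c2 e, hmul, one_mul, c1 e, hmul, map_one, mul_one] at hfR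
        exact hfR.symm
  · rintro ⟨R, ⟨hFS1, hFS2⟩, hmul, S, hset, ⟨ψ⟩⟩
    -- dual family for A
    obtain ⟨nA, a, α, hA⟩ := exists_dualFamily (k := k) A
    -- dual family for S
    have hSfam : IsDualFamily (fun t => ψ (a t))
        (fun t => (α t).comp ψ.symm.toLinearMap) := by
      intro s
      have h0 := congrArg ψ (hA (ψ.symm s))
      rw [map_sum] at h0
      simpa [map_smul] using h0
    -- dual family for E := Module.End k A
    have hEfam : IsDualFamily (k := k)
        (fun p : Fin nA × Fin nA => (α p.2).smulRight (a p.1))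
        (fun p : Fin nA × Fin nA => (α p.1).comp (LinearMap.applyₗ (a p.2))) := by
      intro f
      ext x
      rw [LinearMap.sum_apply]
      have h1 : ∀ p : Fin nA × Fin nA,
          (((α p.1).comp (LinearMap.applyₗ (a p.2))) f • (α p.2).smulRight (a p.1)) x
            = α p.2 x • (α p.1 (f (a p.2)) • a p.1) := by
        intro p
        simp [smul_comm (α p.2 x)]
      rw [Finset.sum_congr rfl fun p _ => h1 p, Fintype.sum_prod_type_right]
      have h2 : ∀ s : Fin nA, ∑ r, α s x • (α r (f (a s)) • a r) = α s x • f (a s) := by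
        intro s
        rw [← Finset.smul_sum, hA (f (a s))]
      rw [Finset.sum_congr rfl fun s _ => h2 s]
      have h3 := congrArg f (hA x)
      rw [map_sum] at h3
      simpa [map_smul] using h3
    have hmem : ∀ f : Module.End k A, f ∈ S ↔
        (f ⊗ₜ[k] (1 : Module.End k A)) * R = R * ((1 : Module.End k A) ⊗ₜ[k] f) := by
      intro f
      rw [← SetLike.mem_coe, hset]
      exact Iff.rfl
    -- slices of R lie in S
    have hsliceR : ∀ ξ : Module.End k A →ₗ[k] k,
        sliceFst (M := Module.End k A) ξ R ∈ S := by
      intro ξ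
      rw [hmem]
      have h := congrArg (LinearMap.lTensor (Module.End k A)
        (sliceFst (M := Module.End k A) ξ)) (hFS1.trans hFS2)
      rw [slice3_12_23, slice3_13_12] at h
      exact h.symm
    -- the canonical dual-basis elements of E and their slices of R
    set U : Fin nA × Fin nA → Module.End k A :=
      fun p => (α p.2).smulRight (a p.1) with hU
    set Φ : Fin nA × Fin nA → (Module.End k A →ₗ[k] k) :=
      fun p => (α p.1).comp (LinearMap.applyₗ (a p.2)) with hΦ
    set g : Fin nA × Fin nA → S :=
      fun j => ⟨sliceFst (M := Module.End k A) (Φ j) R, hsliceR (Φ j)⟩ with hg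
    have hDB1 : R = ∑ j, (g j : Module.End k A) ⊗ₜ[k] U j :=
      eq_sum_sliceFst hEfam R
    -- dual family on E ⊗ E
    have hWfam := IsDualFamily.tensor hEfam hEfam
    -- the E-level FS identity, in sliced form
    have h9 : ∑ j, (g j : Module.End k A) ⊗ₜ[k] ((U j ⊗ₜ[k] (1 : Module.End k A)) * R)
        = ∑ j, (g j : Module.End k A) ⊗ₜ[k] (R * ((1 : Module.End k A) ⊗ₜ[k] U j)) := by
      have l := hFS1
      rw [prod_12_23 R R, prod_23_13 R R] at l
      have e1 : ∀ y : Module.End k A ⊗[k] Module.End k A,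
          LinearMap.lTensor (Module.End k A) (rr y) R
          = ∑ j, (g j : Module.End k A) ⊗ₜ[k] ((U j ⊗ₜ[k] (1 : Module.End k A)) * y) := by
        intro y
        conv_lhs => rw [hDB1]
        rw [map_sum]
        exact Finset.sum_congr rfl fun j _ => by rw [LinearMap.lTensor_tmul, rr_apply]
      have e2 : ∀ y : Module.End k A ⊗[k] Module.End k A,
          LinearMap.lTensor (Module.End k A) (ll y) R
          = ∑ j, (g j : Module.End k A) ⊗ₜ[k] (y * ((1 : Module.End k A) ⊗ₜ[k] U j)) := by
        intro y
        conv_lhs => rw [hDB1]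
        rw [map_sum]
        exact Finset.sum_congr rfl fun j _ => by rw [LinearMap.lTensor_tmul, ll_apply]
      rw [e1 R, e2 R] at l
      exact l
    -- lift to the S-level
    have hval_inj : Function.Injective (S.val.toLinearMap) := Subtype.val_injective
    have h10 : ∑ j, (g j) ⊗ₜ[k] ((U j ⊗ₜ[k] (1 : Module.End k A)) * R)
        = ∑ j, (g j) ⊗ₜ[k] (R * ((1 : Module.End k A) ⊗ₜ[k] U j)) := by
      refine rTensor_injective (M := S) hWfam hval_inj ?_
      rw [map_sum, map_sum]
      simp only [LinearMap.rTensor_tmul]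
      exact h9
    have h11 : ∀ lam : S →ₗ[k] k,
        ((∑ j, lam (g j) • U j) ⊗ₜ[k] (1 : Module.End k A)) * R
          = R * ((1 : Module.End k A) ⊗ₜ[k] (∑ j, lam (g j) • U j)) := by
      intro lam
      have h := congrArg
        (sliceSnd (M := S) (N := Module.End k A ⊗[k] Module.End k A) lam) h10
      rw [map_sum, map_sum] at h
      simp only [sliceSnd_tmul] at h
      have eL : ((∑ j, lam (g j) • U j) ⊗ₜ[k] (1 : Module.End k A)) * R
          = ∑ j, lam (g j) • ((U j ⊗ₜ[k] (1 : Module.End k A)) * R) := by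
        rw [← rr_apply R, map_sum]
        exact Finset.sum_congr rfl fun j _ => by rw [map_smul, rr_apply]
      have eR : R * ((1 : Module.End k A) ⊗ₜ[k] (∑ j, lam (g j) • U j))
          = ∑ j, lam (g j) • (R * ((1 : Module.End k A) ⊗ₜ[k] U j)) := by
        rw [← ll_apply R, map_sum]
        exact Finset.sum_congr rfl fun j _ => by rw [map_smul, ll_apply]
      rw [eL, eR, h]
    set σ : Fin nA → (S →ₗ[k] k) := fun t => (α t).comp ψ.symm.toLinearMap with hσ
    set y : Fin nA → S := fun t => ⟨∑ j, σ t (g j) • U j, (hmem _).mpr (h11 (σ t))⟩ with hy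
    set ε : S ⊗[k] S := ∑ t, (ψ (a t)) ⊗ₜ[k] y t with hε
    have hjε : Algebra.TensorProduct.map S.val S.val ε = R := by
      rw [hε, map_sum]
      have step1 : ∀ t, Algebra.TensorProduct.map S.val S.val ((ψ (a t)) ⊗ₜ[k] y t)
          = ∑ j, σ t (g j) • (((ψ (a t) : Module.End k A)) ⊗ₜ[k] U j) := by
        intro t
        rw [Algebra.TensorProduct.map_tmul]
        have hyt : (S.val (y t) : Module.End k A) = ∑ j, σ t (g j) • U j := rfl
        rw [hyt, tmul_sum]
        exact Finset.sum_congr rfl fun j _ => by rw [tmul_smul]; rfl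
      rw [Finset.sum_congr rfl fun t _ => step1 t, Finset.sum_comm]
      have step2 : ∀ j : Fin nA × Fin nA,
          (∑ t, σ t (g j) • ((ψ (a t) : Module.End k A) ⊗ₜ[k] U j))
            = (g j : Module.End k A) ⊗ₜ[k] U j := by
        intro j
        set T : S →ₗ[k] Module.End k A ⊗[k] Module.End k A :=
          ((TensorProduct.mk k (Module.End k A) (Module.End k A)).flip (U j)).comp
            S.val.toLinearMap with hT
        have hTs : ∀ s : S, T s = (s : Module.End k A) ⊗ₜ[k] U j := fun s => rfl
        calc ∑ t, σ t (g j) • ((ψ (a t) : Module.End k A) ⊗ₜ[k] U j)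
            = ∑ t, T (σ t (g j) • ψ (a t)) := by
              refine Finset.sum_congr rfl fun t _ => ?_
              rw [map_smul, hTs]
          _ = T (∑ t, σ t (g j) • ψ (a t)) := (map_sum T _ _).symm
          _ = T (g j) := by rw [hSfam (g j)]
          _ = (g j : Module.End k A) ⊗ₜ[k] U j := rfl
      rw [Finset.sum_congr rfl fun j _ => step2 j]
      exact hDB1.symm
    have hcomp : (Algebra.TensorProduct.map S.val S.val).toLinearMap
        = (LinearMap.rTensor (Module.End k A) S.val.toLinearMap).comp
            (LinearMap.lTensor S S.val.toLinearMap) := by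
      apply TensorProduct.ext'
      intro s t
      simp
    have hinj2 : Function.Injective (Algebra.TensorProduct.map S.val S.val) := by
      have hco : ⇑(Algebra.TensorProduct.map S.val S.val)
          = ⇑(LinearMap.rTensor (Module.End k A) S.val.toLinearMap) ∘
              ⇑(LinearMap.lTensor S S.val.toLinearMap) := by
        rw [← LinearMap.coe_comp, ← hcomp]; rfl
      rw [hco]
      exact (rTensor_injective (M := S) hEfam hval_inj).comp (lTensor_injective (M := S) (N := S) hSfam hval_inj)
    have hcent : ∀ s : S, (s ⊗ₜ[k] (1 : S)) * ε = ε * ((1 : S) ⊗ₜ[k] s) := by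
      intro s
      apply hinj2
      rw [map_mul, map_mul, hjε, Algebra.TensorProduct.map_tmul,
        Algebra.TensorProduct.map_tmul, map_one]
      exact (hmem (s : Module.End k A)).mp s.2
    have hmulε : LinearMap.mul' k S ε = 1 := by
      apply Subtype.val_injective
      show (S.val (LinearMap.mul' k S ε) : Module.End k A) = _
      rw [← mul'_map (B := S) S.val ε, hjε, hmul]
      exact (OneMemClass.coe_one S).symm
    refine ⟨Algebra.TensorProduct.map ψ.symm.toAlgHom ψ.symm.toAlgHom ε, ?_, ?_⟩
    · intro x
      have h1 : (x ⊗ₜ[k] (1:A))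
          = Algebra.TensorProduct.map ψ.symm.toAlgHom ψ.symm.toAlgHom
              ((ψ x) ⊗ₜ[k] (1:S)) := by
        rw [Algebra.TensorProduct.map_tmul, map_one]
        congr 1
        exact (ψ.symm_apply_apply x).symm
      have h2 : ((1:A) ⊗ₜ[k] x)
          = Algebra.TensorProduct.map ψ.symm.toAlgHom ψ.symm.toAlgHom
              ((1:S) ⊗ₜ[k] (ψ x)) := by
        rw [Algebra.TensorProduct.map_tmul, map_one]
        congr 1
        exact (ψ.symm_apply_apply x).symm
      rw [h1, h2, ← map_mul, ← map_mul, hcent (ψ x)]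
    · rw [mul'_map (B := S), hmulε, map_one]
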